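/- For every real ν with 0 ≤ ν < 1/3 there exist bandwidths b : Fin 5 → ℝ with 0 < b i ≤ 1 − ν for all i, and an assignment r₀ : Fin 4 → Fin 2 of the first four flows, such that: (a) r₀ is ν-feasible (each edge load is at most 1 − ν); (b) there exists a ν-feasible assignment of all five flows; (c) for every edge e, the extension of r₀ placing flow 4 on e is not ν-feasible; and (d) every assignment r' : Fin 4 → Fin 2 differing from r₀ at exactly one index has some edge whose load is strictly greater than 1. Hence reserving a scratch capacity of ν < 1/3 on every link does not prevent untimed single-flow reroutes from exceeding even the full link capacity. -/

import Mathlib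

open Finset

/-- The load on edge `e`: the sum of the bandwidths of the flows assigned to `e`. -/
noncomputable def load {ι : Type*} [Fintype ι] {m : ℕ} (b : ι → ℝ) (r : ι → Fin m)
    (e : Fin m) : ℝ :=
  ∑ i ∈ univ.filter (fun i => r i = e), b i

/-- An assignment is ν-feasible if the load of every edge is at most the usable
capacity `1 - ν` (a fraction `ν` of the unit capacity is reserved as scratch). -/
def NuFeasible {ι : Type*} [Fintype ι] {m : ℕ} (ν : ℝ) (b : ι → ℝ) (r : ι → Fin m) : Prop :=
  ∀ e, load b r e ≤ 1 - ν

lemma load4 (b : Fin 4 → ℝ) (r : Fin 4 → Fin 2) (e : Fin 2) :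
    load b r e = (if r 0 = e then b 0 else 0) + (if r 1 = e then b 1 else 0)
      + (if r 2 = e then b 2 else 0) + (if r 3 = e then b 3 else 0) := by
  rw [load, Finset.sum_filter, Fin.sum_univ_four]

lemma load5 (b : Fin 5 → ℝ) (r : Fin 5 → Fin 2) (e : Fin 2) :
    load b r e = (if r 0 = e then b 0 else 0) + (if r 1 = e then b 1 else 0)
      + (if r 2 = e then b 2 else 0) + (if r 3 = e then b 3 else 0)
      + (if r 4 = e then b 4 else 0) := by
  rw [load, Finset.sum_filter, Fin.sum_univ_five]

theorem stmt8 (ν : ℝ) (hν₀ : 0 ≤ ν) (hν₁ : ν < 1/3) :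
    ∃ b : Fin 5 → ℝ, (∀ i, 0 < b i ∧ b i ≤ 1 - ν) ∧
    ∃ r₀ : Fin 4 → Fin 2,
      -- (a) `r₀` is ν-feasible
      NuFeasible ν (fun i : Fin 4 => b i.castSucc) r₀ ∧
      -- (b) all five flows admit a ν-feasible assignment
      (∃ r : Fin 5 → Fin 2, NuFeasible ν b r) ∧
      -- (c) placing flow 4 on either edge, without rerouting, is not ν-feasible
      (∀ e : Fin 2, ¬ NuFeasible ν b (Fin.snoc r₀ e)) ∧
      -- (d) any single-flow reroute loads some edge beyond the full capacity 1
      (∀ r' : Fin 4 → Fin 2, (∃! i, r' i ≠ r₀ i) →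
        ∃ e : Fin 2, 1 < load (fun i : Fin 4 => b i.castSucc) r' e) := by
  refine ⟨![(3-ν)/8, (1-ν)/2, (3-ν)/8, (1-ν)/2, (1-3*ν)/4], ?_,
    (![0,0,1,1] : Fin 4 → Fin 2), ?_, ⟨(![0,1,0,1,0] : Fin 5 → Fin 2), ?_⟩, ?_, ?_⟩
  · intro i
    fin_cases i <;> norm_num <;> constructor <;> linarith
  · intro e
    rw [load4]
    fin_cases e <;>
      simp [show ((0:Fin 4).castSucc)=0 from rfl, show ((1:Fin 4).castSucc)=1 from rfl,
        show ((2:Fin 4).castSucc)=2 from rfl, show ((3:Fin 4).castSucc)=3 from rfl] <;>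
      linarith
  · intro e
    rw [load5]
    fin_cases e <;> simp <;> linarith
  · intro e hf
    have hsnoc : ∀ e : Fin 2, Fin.snoc (![0,0,1,1] : Fin 4 → Fin 2) e
        = ![0,0,1,1,e] := by
      intro e; funext i; fin_cases i <;> rfl
    fin_cases e
    · have := hf 0
      rw [hsnoc, load5] at this
      simp at this
      linarith
    · have := hf 1
      rw [hsnoc, load5] at this
      simp at this
      linarith
  · rintro r' ⟨i, hi, huniq⟩
    have key : ∀ j : Fin 4, j ≠ i → r' j = ![0,0,1,1] j := by
      intro j hj
      by_contra h
      exact hj (huniq j h)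
    have hcases : i = 0 ∨ i = 1 ∨ i = 2 ∨ i = 3 := by omega
    rcases hcases with rfl | rfl | rfl | rfl
    · have h0 : r' 0 = 1 := by
        simp only [Matrix.cons_val_zero] at hi; omega
      have h1 := key 1 (by decide); have h2 := key 2 (by decide)
      have h3 := key 3 (by decide)
      simp at h1 h2 h3
      refine ⟨1, ?_⟩
      rw [load4]
      simp [h0, h1, h2, h3,
        show ((0:Fin 4).castSucc)=0 from rfl, show ((1:Fin 4).castSucc)=1 from rfl,
        show ((2:Fin 4).castSucc)=2 from rfl, show ((3:Fin 4).castSucc)=3 from rfl]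
      linarith
    · have h1 : r' 1 = 1 := by
        simp at hi; omega
      have h0 := key 0 (by decide); have h2 := key 2 (by decide)
      have h3 := key 3 (by decide)
      simp at h0 h2 h3
      refine ⟨1, ?_⟩
      rw [load4]
      simp [h0, h1, h2, h3,
        show ((0:Fin 4).castSucc)=0 from rfl, show ((1:Fin 4).castSucc)=1 from rfl,
        show ((2:Fin 4).castSucc)=2 from rfl, show ((3:Fin 4).castSucc)=3 from rfl]
      linarith
    · have h2 : r' 2 = 0 := by
        simp at hi; omega
      have h0 := key 0 (by decide); have h1 := key 1 (by decide)
      have h3 := key 3 (by decide)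
      simp at h0 h1 h3
      refine ⟨0, ?_⟩
      rw [load4]
      simp [h0, h1, h2, h3,
        show ((0:Fin 4).castSucc)=0 from rfl, show ((1:Fin 4).castSucc)=1 from rfl,
        show ((2:Fin 4).castSucc)=2 from rfl, show ((3:Fin 4).castSucc)=3 from rfl]
      linarith
    · have h3 : r' 3 = 0 := by
        simp at hi; omega
      have h0 := key 0 (by decide); have h1 := key 1 (by decide)
      have h2 := key 2 (by decide)
      simp at h0 h1 h2
      refine ⟨0, ?_⟩
      rw [load4]
      simp [h0, h1, h2, h3,
        show ((0:Fin 4).castSucc)=0 from rfl, show ((1:Fin 4).castSucc)=1 from rfl,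
        show ((2:Fin 4).castSucc)=2 from rfl, show ((3:Fin 4).castSucc)=3 from rfl]
      linarith
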